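/- If a set S ⊆ ℝ² is tileable by n copies of T, then its image √2 · S = {√2 · x : x ∈ S} under the homothety with ratio √2 centered at the origin is tileable by 2n copies of T. -/

import Mathlib

open Real Pointwise

noncomputable section

/-- The Euclidean plane `ℝ²`. -/
abbrev Pt : Type := EuclideanSpace ℝ (Fin 2)

/-- The point `(x, y)` of the plane. -/
def pt (x y : ℝ) : Pt := (WithLp.equiv 2 (Fin 2 → ℝ)).symm ![x, y]

/-- The closed isosceles right triangle with vertices `(0,0)`, `(1,0)`, `(0,1)`. -/
def T : Set Pt := convexHull ℝ {pt 0 0, pt 1 0, pt 0 1}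

/-- `S` is tileable by `n` copies of `T`: there are isometries `f₁, …, fₙ` of the plane
(possibly orientation-reversing) such that the sets `fᵢ(T)` have pairwise disjoint
interiors and their union is `S`. -/
def TileableBy (S : Set Pt) (n : ℕ) : Prop :=
  ∃ f : Fin n → (Pt ≃ᵢ Pt),
    (∀ i j, i ≠ j → Disjoint (interior (f i '' T)) (interior (f j '' T))) ∧
    S = ⋃ i, f i '' T

/-- Two subsets of the plane are congruent if some isometry maps one onto the other. -/
def PtCongruent (P Q : Set Pt) : Prop := ∃ f : Pt ≃ᵢ Pt, f '' P = Q

/-- The family of pieces `P₁, …, P_k` forms `S`: there are isometries `g₁, …, g_k` of the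
plane such that the sets `gᵢ(Pᵢ)` have pairwise disjoint interiors and their union is `S`. -/
def Forms {k : ℕ} (P : Fin k → Set Pt) (S : Set Pt) : Prop :=
  ∃ g : Fin k → (Pt ≃ᵢ Pt),
    (∀ i j, i ≠ j → Disjoint (interior (g i '' P i)) (interior (g j '' P j))) ∧
    S = ⋃ i, g i '' P i

/-! ### Auxiliary material -/

@[simp] lemma pt_zero' (x y : ℝ) : pt x y 0 = x := rfl
@[simp] lemma pt_one' (x y : ℝ) : pt x y 1 = y := rfl

lemma pt_ext' (p : Pt) : p = pt (p 0) (p 1) := by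
  ext i; fin_cases i <;> rfl

/-- rotation by (a,b) with a²+b²=1, then translation by (t₁,t₂), as an isometry equiv. -/
def rot (a b t₁ t₂ : ℝ) (h : a^2 + b^2 = 1) : Pt ≃ᵢ Pt where
  toFun p := pt (a * p 0 - b * p 1 + t₁) (b * p 0 + a * p 1 + t₂)
  invFun p := pt (a * (p 0 - t₁) + b * (p 1 - t₂)) (-b * (p 0 - t₁) + a * (p 1 - t₂))
  left_inv p := by
    refine (pt_ext' p).symm ▸ ?_
    ext i; fin_cases i
    · show a * (_ - t₁) + b * (_ - t₂) = p 0
      simp only [pt_zero', pt_one']; linear_combination (p 0) * h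
    · show -b * (_ - t₁) + a * (_ - t₂) = p 1
      simp only [pt_zero', pt_one']; linear_combination (p 1) * h
  right_inv p := by
    ext i; fin_cases i
    · show a * _ - b * _ + t₁ = p 0
      simp only [pt_zero', pt_one']; linear_combination (p 0 - t₁) * h
    · show b * _ + a * _ + t₂ = p 1
      simp only [pt_zero', pt_one']; linear_combination (p 1 - t₂) * h
  isometry_toFun := by
    apply Isometry.of_dist_eq
    intro p q
    rw [EuclideanSpace.dist_eq, EuclideanSpace.dist_eq]
    congr 1
    rw [Fin.sum_univ_two, Fin.sum_univ_two]
    simp only [pt_zero', pt_one', Real.dist_eq, sq_abs]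
    nlinarith [h]

@[simp] lemma rot_apply (a b t₁ t₂ : ℝ) (h : a^2 + b^2 = 1) (p : Pt) :
    rot a b t₁ t₂ h p = pt (a * p 0 - b * p 1 + t₁) (b * p 0 + a * p 1 + t₂) := rfl

section Split

variable {E : Type*} [NormedAddCommGroup E] [NormedSpace ℝ E]

lemma segment_split' (b c : E) :
    segment ℝ b c = segment ℝ b (midpoint ℝ b c) ∪ segment ℝ (midpoint ℝ b c) c := by
  have hm : midpoint ℝ b c = (2⁻¹ : ℝ) • b + (2⁻¹ : ℝ) • c := by
    rw [midpoint_eq_smul_add, smul_add]; norm_num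
  apply Set.Subset.antisymm
  · rintro x ⟨s, t, hs, ht, hst, rfl⟩
    by_cases hle : s ≥ 2⁻¹
    · left
      exact ⟨s - t, 2 * t, by linarith, by linarith, by linarith, by rw [hm]; module⟩
    · right
      exact ⟨2 * s, t - s, by linarith, by linarith, by linarith, by rw [hm]; module⟩
  · have hmem : midpoint ℝ b c ∈ segment ℝ b c := midpoint_mem_segment b c
    have hconv : Convex ℝ (segment ℝ b c) := convex_segment b c
    exact Set.union_subset
      (hconv.segment_subset (left_mem_segment ℝ b c) hmem)
      (hconv.segment_subset hmem (right_mem_segment ℝ b c))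

lemma triangle_split' (a b c : E) :
    convexHull ℝ {a, b, c} =
      convexHull ℝ {midpoint ℝ b c, a, b} ∪ convexHull ℝ {midpoint ℝ b c, c, a} := by
  set m := midpoint ℝ b c with hm
  apply Set.Subset.antisymm
  · rw [convexHull_insert (by simp : ({b, c} : Set E).Nonempty), convexHull_pair,
      segment_split' b c]
    rintro x hx
    obtain ⟨w, hw, hxy'⟩ := Set.mem_iUnion₂.mp hx
    rw [Set.mem_singleton_iff] at hw
    rw [hw] at hxy'
    obtain ⟨y, hy, hxy⟩ := Set.mem_iUnion₂.mp hxy'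
    rw [← hm] at hy
    rcases hy with hy | hy
    · left
      have h1 : segment ℝ b m ⊆ convexHull ℝ {m, a, b} := by
        rw [← convexHull_pair]
        exact convexHull_mono (by intro z hz; rcases hz with h|h <;> simp_all)
      exact (convex_convexHull ℝ _).segment_subset
        (subset_convexHull ℝ _ (by simp)) (h1 hy) hxy
    · right
      have h1 : segment ℝ m c ⊆ convexHull ℝ {m, c, a} := by
        rw [← convexHull_pair]
        exact convexHull_mono (by intro z hz; rcases hz with h|h <;> simp_all)
      exact (convex_convexHull ℝ _).segment_subset
        (subset_convexHull ℝ _ (by simp)) (h1 hy) hxy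
  · have hmmem : m ∈ convexHull ℝ ({a, b, c} : Set E) := by
      have h1 : m ∈ segment ℝ b c := midpoint_mem_segment b c
      have hsub : segment ℝ b c ⊆ convexHull ℝ ({a, b, c} : Set E) := by
        rw [← convexHull_pair]
        exact convexHull_mono (by intro z hz; rcases hz with h|h <;> simp_all)
      exact hsub h1
    apply Set.union_subset <;>
      apply convexHull_min _ (convex_convexHull ℝ _) <;>
      intro z hz <;>
      rcases hz with h|h|h <;>
      first
        | (subst h; exact hmmem)
        | (subst h; exact subset_convexHull ℝ _ (by simp))

end Split

/-- Images of convex hulls under plane isometries. -/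
lemma iso_image_convexHull (φ : Pt ≃ᵢ Pt) (s : Set Pt) :
    φ '' convexHull ℝ s = convexHull ℝ (φ '' s) := by
  have h : ⇑φ = ⇑(φ.toRealAffineIsometryEquiv.toAffineEquiv.toAffineMap) := by
    funext x; simp [IsometryEquiv.coe_toRealAffineIsometryEquiv]
  rw [h, AffineMap.image_convexHull]

/-- A subset of the diagonal line with nonempty interior is impossible. -/
lemma open_subset_diag_empty (U : Set Pt) (hU : IsOpen U)
    (hsub : U ⊆ {p : Pt | p 0 = p 1}) : U = ∅ := by
  by_contra h
  obtain ⟨p, hp⟩ := Set.nonempty_iff_ne_empty.2 h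
  obtain ⟨ε, hε, hball⟩ := Metric.isOpen_iff.1 hU p hp
  set q : Pt := pt (p 0 + ε / 2) (p 1) with hq
  have hqball : q ∈ Metric.ball p ε := by
    rw [Metric.mem_ball, EuclideanSpace.dist_eq, Fin.sum_univ_two]
    have h0 : dist (q 0) (p 0) = ε / 2 := by
      rw [hq, pt_zero', Real.dist_eq]
      rw [show p 0 + ε / 2 - p 0 = ε / 2 by ring, abs_of_pos (by linarith)]
    have h1 : dist (q 1) (p 1) = 0 := by rw [hq, pt_one', dist_self]
    rw [h0, h1]
    rw [show (ε/2)^2 + (0:ℝ)^2 = (ε/2)^2 by ring, Real.sqrt_sq (by linarith)]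
    linarith
  have hpd : p 0 = p 1 := hsub hp
  have hqd : q 0 = q 1 := hsub (hball hqball)
  rw [hq, pt_zero', pt_one'] at hqd
  linarith

lemma smul_pt (c x y : ℝ) : c • (pt x y) = pt (c * x) (c * y) := by
  ext i; fin_cases i <;> rfl

/-- the two halves of the √2-scaled triangle -/
def halfIso : Fin 2 → (Pt ≃ᵢ Pt) := by
  have hr : (-(Real.sqrt 2 / 2))^2 + (-(Real.sqrt 2 / 2))^2 = 1 := by
    have : Real.sqrt 2 ^ 2 = 2 := Real.sq_sqrt (by norm_num)
    nlinarith
  have hr' : (-(Real.sqrt 2 / 2))^2 + (Real.sqrt 2 / 2)^2 = 1 := by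
    have : Real.sqrt 2 ^ 2 = 2 := Real.sq_sqrt (by norm_num)
    nlinarith
  exact ![rot (-(Real.sqrt 2 / 2)) (-(Real.sqrt 2 / 2)) (Real.sqrt 2 / 2) (Real.sqrt 2 / 2) hr,
    rot (-(Real.sqrt 2 / 2)) (Real.sqrt 2 / 2) (Real.sqrt 2 / 2) (Real.sqrt 2 / 2) hr']

lemma pt_eq {x y x' y' : ℝ} (hx : x = x') (hy : y = y') : pt x y = pt x' y' := by
  rw [hx, hy]

lemma halfIso_image0 :
    (halfIso 0 '' T)
      = convexHull ℝ {pt (Real.sqrt 2/2) (Real.sqrt 2/2), pt 0 0, pt (Real.sqrt 2) 0} := by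
  rw [T, iso_image_convexHull, Set.image_insert_eq, Set.image_insert_eq, Set.image_singleton]
  congr 1
  have e1 : halfIso 0 (pt 0 0) = pt (Real.sqrt 2/2) (Real.sqrt 2/2) := by
    simp only [halfIso, Matrix.cons_val_zero, rot_apply, pt_zero', pt_one']
    exact pt_eq (by ring) (by ring)
  have e2 : halfIso 0 (pt 1 0) = pt 0 0 := by
    simp only [halfIso, Matrix.cons_val_zero, rot_apply, pt_zero', pt_one']
    exact pt_eq (by ring) (by ring)
  have e3 : halfIso 0 (pt 0 1) = pt (Real.sqrt 2) 0 := by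
    simp only [halfIso, Matrix.cons_val_zero, rot_apply, pt_zero', pt_one']
    exact pt_eq (by ring) (by ring)
  rw [e1, e2, e3]

lemma halfIso_image1 :
    (halfIso 1 '' T)
      = convexHull ℝ {pt (Real.sqrt 2/2) (Real.sqrt 2/2), pt 0 (Real.sqrt 2), pt 0 0} := by
  rw [T, iso_image_convexHull, Set.image_insert_eq, Set.image_insert_eq, Set.image_singleton]
  congr 1
  have e1 : halfIso 1 (pt 0 0) = pt (Real.sqrt 2/2) (Real.sqrt 2/2) := by
    simp only [halfIso, Matrix.cons_val_one, Matrix.head_cons, rot_apply, pt_zero', pt_one']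
    exact pt_eq (by simp only [pt_zero', pt_one']; ring) (by simp only [pt_zero', pt_one']; ring)
  have e2 : halfIso 1 (pt 1 0) = pt 0 (Real.sqrt 2) := by
    simp only [halfIso, Matrix.cons_val_one, Matrix.head_cons, rot_apply, pt_zero', pt_one']
    exact pt_eq (by simp only [pt_zero', pt_one']; ring) (by simp only [pt_zero', pt_one']; ring)
  have e3 : halfIso 1 (pt 0 1) = pt 0 0 := by
    simp only [halfIso, Matrix.cons_val_one, Matrix.head_cons, rot_apply, pt_zero', pt_one']
    exact pt_eq (by simp only [pt_zero', pt_one']; ring) (by simp only [pt_zero', pt_one']; ring)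
  rw [e1, e2, e3]

theorem sqrt_two_smul_T :
    Real.sqrt 2 • T = (halfIso 0 '' T) ∪ (halfIso 1 '' T) := by
  have hmid : midpoint ℝ (pt (Real.sqrt 2) 0) (pt 0 (Real.sqrt 2))
      = pt (Real.sqrt 2/2) (Real.sqrt 2/2) := by
    rw [midpoint_eq_smul_add]
    ext i
    fin_cases i
    · show (⅟(2:ℝ)) * (Real.sqrt 2 + 0) = Real.sqrt 2 / 2
      rw [invOf_eq_inv]; ring
    · show (⅟(2:ℝ)) * (0 + Real.sqrt 2) = Real.sqrt 2 / 2
      rw [invOf_eq_inv]; ring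
  have hT : Real.sqrt 2 • T
      = convexHull ℝ {pt 0 0, pt (Real.sqrt 2) 0, pt 0 (Real.sqrt 2)} := by
    rw [T, ← convexHull_smul]
    congr 1
    rw [Set.smul_set_insert, Set.smul_set_insert, Set.smul_set_singleton,
      smul_pt, smul_pt, smul_pt]
    norm_num
  rw [hT, triangle_split' (pt 0 0) (pt (Real.sqrt 2) 0) (pt 0 (Real.sqrt 2)), hmid,
    halfIso_image0, halfIso_image1]

theorem halfIso_disjoint :
    Disjoint (interior (halfIso 0 '' T)) (interior (halfIso 1 '' T)) := by
  have hlin1 : IsLinearMap ℝ (fun p : Pt => p 0 - p 1) := by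
    constructor
    · intro x y; simp only [PiLp.add_apply]; ring
    · intro c x; simp only [PiLp.smul_apply, smul_eq_mul]; ring
  have hsub0 : (halfIso 0 '' T) ⊆ {p : Pt | p 1 ≤ p 0} := by
    rw [halfIso_image0]
    apply convexHull_min _ (by
      have := convex_halfSpace_ge (𝕜 := ℝ) hlin1 0
      convert this using 1
      ext p; simp [sub_nonneg])
    rintro z (rfl | rfl | rfl) <;> simp [Real.sqrt_nonneg]
  have hsub1 : (halfIso 1 '' T) ⊆ {p : Pt | p 0 ≤ p 1} := by
    rw [halfIso_image1]
    apply convexHull_min _ (by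
      have hlin2 : IsLinearMap ℝ (fun p : Pt => p 1 - p 0) := by
        constructor
        · intro x y; simp only [PiLp.add_apply]; ring
        · intro c x; simp only [PiLp.smul_apply, smul_eq_mul]; ring
      have := convex_halfSpace_ge (𝕜 := ℝ) hlin2 0
      convert this using 1
      ext p; simp [sub_nonneg])
    rintro z (rfl | rfl | rfl) <;> simp [Real.sqrt_nonneg]
  rw [Set.disjoint_iff_inter_eq_empty]
  apply open_subset_diag_empty _ ((isOpen_interior).inter isOpen_interior)
  intro p hp
  have h0 : p 1 ≤ p 0 := hsub0 (interior_subset hp.1)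
  have h1 : p 0 ≤ p 1 := hsub1 (interior_subset hp.2)
  exact le_antisymm h1 h0

/-- conjugating an isometry by the √2-homothety -/
lemma conj_exists (f : Pt ≃ᵢ Pt) :
    ∃ g : Pt ≃ᵢ Pt, ∀ x : Pt, g (Real.sqrt 2 • x) = Real.sqrt 2 • f x := by
  refine ⟨(f.toRealLinearIsometryEquiv.toIsometryEquiv).trans
    (IsometryEquiv.addRight (Real.sqrt 2 • f 0)), fun x => ?_⟩
  have h1 : f.toRealLinearIsometryEquiv (Real.sqrt 2 • x)
      = Real.sqrt 2 • f.toRealLinearIsometryEquiv x := by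
    exact f.toRealLinearIsometryEquiv.map_smul _ _
  show f.toRealLinearIsometryEquiv (Real.sqrt 2 • x) + Real.sqrt 2 • f 0 = _
  rw [h1, f.toRealLinearIsometryEquiv_apply, smul_sub]
  module

lemma conj_image (f g : Pt ≃ᵢ Pt)
    (hg : ∀ x : Pt, g (Real.sqrt 2 • x) = Real.sqrt 2 • f x) (A : Set Pt) :
    g '' (Real.sqrt 2 • A) = Real.sqrt 2 • (f '' A) := by
  ext y
  constructor
  · rintro ⟨z, ⟨a, ha, rfl⟩, rfl⟩
    exact ⟨f a, ⟨a, ha, rfl⟩, (hg a).symm⟩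
  · rintro ⟨z, ⟨a, ha, rfl⟩, rfl⟩
    exact ⟨Real.sqrt 2 • a, ⟨a, ha, rfl⟩, hg a⟩

/-- If `S` is tileable by `n` copies of `T`, then the homothetic image `√2 • S` is tileable
by `2n` copies of `T`. -/
theorem sqrt_two_smul_tileable (S : Set Pt) (n : ℕ) (htile : TileableBy S n) :
    TileableBy (Real.sqrt 2 • S) (2 * n) := by
  obtain ⟨f, hdisj, hS⟩ := htile
  have hs2 : Real.sqrt 2 ≠ 0 := (Real.sqrt_pos.mpr (by norm_num)).ne'
  have hsmul_inj : Function.Injective (fun x : Pt => Real.sqrt 2 • x) :=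
    smul_right_injective Pt hs2
  choose g hg using fun i => conj_exists (f i)
  set e : Fin (2 * n) ≃ Fin 2 × Fin n := finProdFinEquiv.symm with he
  refine ⟨fun k => (halfIso (e k).1).trans (g (e k).2), ?_, ?_⟩
  · intro k k' hkk'
    have himg : ∀ k : Fin (2*n),
        ((halfIso (e k).1).trans (g (e k).2)) '' T
          = g (e k).2 '' (halfIso (e k).1 '' T) := by
      intro k
      rw [show ⇑((halfIso (e k).1).trans (g (e k).2)) = ⇑(g (e k).2) ∘ ⇑(halfIso (e k).1)
        from rfl, Set.image_comp]
    rw [himg k, himg k']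
    by_cases hj : (e k).2 = (e k').2
    · -- same isometry, different halves
      have ha : (e k).1 ≠ (e k').1 := by
        intro hA
        apply hkk'
        apply e.injective
        exact Prod.ext hA hj
      have hint : ∀ (j : Fin n) (a : Fin 2),
          interior (g j '' (halfIso a '' T)) = g j '' interior (halfIso a '' T) := by
        intro j a
        exact ((g j).toHomeomorph.image_interior _).symm
      rw [hj, hint, hint]
      rw [Set.disjoint_image_iff (g (e k').2).injective]
      have : ∀ a a' : Fin 2, a ≠ a' →
          Disjoint (interior (halfIso a '' T)) (interior (halfIso a' '' T)) := by
        intro a a' haa'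
        fin_cases a <;> fin_cases a' <;> simp_all <;>
          [exact halfIso_disjoint; exact halfIso_disjoint.symm]
      exact this _ _ ha
    · -- different isometries
      have hbig : ∀ k : Fin (2*n),
          interior (g (e k).2 '' (halfIso (e k).1 '' T))
            ⊆ Real.sqrt 2 • interior (f (e k).2 '' T) := by
        intro k
        have h1 : halfIso (e k).1 '' T ⊆ Real.sqrt 2 • T := by
          rw [sqrt_two_smul_T]
          have h01 : (e k).1 = 0 ∨ (e k).1 = 1 := by omega
          rcases h01 with h | h <;> rw [h]
          · exact Set.subset_union_left
          · exact Set.subset_union_right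
        have h2 : g (e k).2 '' (halfIso (e k).1 '' T)
            ⊆ g (e k).2 '' (Real.sqrt 2 • T) := Set.image_mono h1
        rw [conj_image (f (e k).2) (g (e k).2) (hg (e k).2)] at h2
        calc interior (g (e k).2 '' (halfIso (e k).1 '' T))
            ⊆ interior (Real.sqrt 2 • (f (e k).2 '' T)) := interior_mono h2
          _ = Real.sqrt 2 • interior (f (e k).2 '' T) := interior_smul₀ hs2 _
      refine Set.disjoint_of_subset (hbig k) (hbig k') ?_
      rw [← Set.image_smul, ← Set.image_smul,
        Set.disjoint_image_iff hsmul_inj]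
      exact hdisj _ _ hj
  · rw [hS, Set.smul_set_iUnion]
    apply Set.Subset.antisymm
    · intro x hx
      obtain ⟨i, hi⟩ := Set.mem_iUnion.mp hx
      rw [← conj_image (f i) (g i) (hg i), sqrt_two_smul_T, Set.image_union] at hi
      rcases hi with hi | hi
      · apply Set.mem_iUnion.mpr ⟨e.symm (0, i), ?_⟩
        rw [show ⇑((halfIso (e (e.symm (0,i))).1).trans (g (e (e.symm (0,i))).2))
          = ⇑(g (e (e.symm (0,i))).2) ∘ ⇑(halfIso (e (e.symm (0,i))).1) from rfl,
          Set.image_comp, e.apply_symm_apply]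
        exact hi
      · apply Set.mem_iUnion.mpr ⟨e.symm (1, i), ?_⟩
        rw [show ⇑((halfIso (e (e.symm (1,i))).1).trans (g (e (e.symm (1,i))).2))
          = ⇑(g (e (e.symm (1,i))).2) ∘ ⇑(halfIso (e (e.symm (1,i))).1) from rfl,
          Set.image_comp, e.apply_symm_apply]
        exact hi
    · intro x hx
      obtain ⟨k, hk⟩ := Set.mem_iUnion.mp hx
      rw [show ⇑((halfIso (e k).1).trans (g (e k).2)) = ⇑(g (e k).2) ∘ ⇑(halfIso (e k).1)
        from rfl, Set.image_comp] at hk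
      apply Set.mem_iUnion.mpr ⟨(e k).2, ?_⟩
      rw [← conj_image (f (e k).2) (g (e k).2) (hg (e k).2), sqrt_two_smul_T,
        Set.image_union]
      have h01 : (e k).1 = 0 ∨ (e k).1 = 1 := by omega
      rcases h01 with h | h
      · left; rw [← h]; exact hk
      · right; rw [← h]; exact hk
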